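/- arXiv:2306.10566 — 4 statements merged into one kernel-verified Lean document; each statement's English description precedes it below -/
import Mathlib

section
/- Let A be an Ext-finite abelian category and A an object with Ext^1(A,A)=0. If 0 → B → E → A' → 0 is a right semi-universal extension of B by A (i.e. A' ∈ add(A) and the connecting map Hom(A,A') → Ext^1(A,B) is surjective), then Ext^1(A,E)=0. -/
open CategoryTheory CategoryTheory.Limits CategoryTheory.Abelian

attribute [local instance] CategoryTheory.Abelian.hasFiniteBiproducts

universe w v u u'

namespace WideSub

variable {C : Type u} [Category.{v} C] [Abelian C]

section Ext

variable [HasExt.{w} C]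

/-- An abelian category is hereditary if `Ext²` vanishes identically. -/
def Hereditary (C : Type u) [Category.{v} C] [Abelian C] [HasExt.{w} C] : Prop :=
  ∀ X Y : C, Subsingleton (Abelian.Ext X Y 2)

/-- An object is rigid if `Ext¹(X,X) = 0`. -/
def Rigid (X : C) : Prop := Subsingleton (Abelian.Ext X X 1)

/-- An object is exceptional if it is rigid and each nonzero endomorphism is invertible
(i.e. its endomorphism ring is a division algebra). -/
def IsExceptional (X : C) : Prop :=
  Rigid X ∧ ∀ f : X ⟶ X, f ≠ 0 → IsIso f

/-- `(E 0, ..., E (n-1))` is an exceptional sequence: each object is exceptional and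
`Hom(Eᵢ, Eⱼ) = 0 = Ext^p(Eᵢ, Eⱼ)` for `i > j`, `p ≥ 1`. -/
def ExceptionalSeq {n : ℕ} (E : Fin n → C) : Prop :=
  (∀ i, IsExceptional (E i)) ∧
    ∀ i j : Fin n, j < i →
      (∀ f : E i ⟶ E j, f = 0) ∧ ∀ p : ℕ, 1 ≤ p → Subsingleton (Abelian.Ext (E i) (E j) p)

/-- The right perpendicular category of a class of objects. -/
def rightPerp (𝒳 : Set C) : Set C :=
  {A | ∀ X ∈ 𝒳, (∀ f : X ⟶ A, f = 0) ∧ Subsingleton (Abelian.Ext X A 1)}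

/-- The left perpendicular category of a class of objects. -/
def leftPerp (𝒳 : Set C) : Set C :=
  {A | ∀ X ∈ 𝒳, (∀ f : A ⟶ X, f = 0) ∧ Subsingleton (Abelian.Ext A X 1)}

end Ext

/-- A wide subcategory: closed under isomorphisms, kernels, cokernels and extensions. -/
def IsWide (W : Set C) : Prop :=
  (∀ X Y : C, Nonempty (X ≅ Y) → X ∈ W → Y ∈ W) ∧
  (∀ (X Y : C) (f : X ⟶ Y), X ∈ W → Y ∈ W → kernel f ∈ W) ∧
  (∀ (X Y : C) (f : X ⟶ Y), X ∈ W → Y ∈ W → cokernel f ∈ W) ∧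
  (∀ S : ShortComplex C, S.ShortExact → S.X₁ ∈ W → S.X₃ ∈ W → S.X₂ ∈ W)

/-- The smallest wide subcategory containing a class of objects. -/
def wideClosure (𝒳 : Set C) : Set C :=
  {A | ∀ W : Set C, IsWide W → 𝒳 ⊆ W → A ∈ W}

section Ext

variable [HasExt.{w} C]

/-- `(𝒳, 𝒴)` is an Ext-orthogonal pair. -/
def ExtOrthPair (𝒳 𝒴 : Set C) : Prop :=
  rightPerp 𝒳 = 𝒴 ∧ leftPerp 𝒴 = 𝒳

/-- `(𝒳, 𝒴)` is an Ext-orthogonal pair relative to the wide subcategory `W`. -/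
def ExtOrthPairIn (W 𝒳 𝒴 : Set C) : Prop :=
  rightPerp 𝒳 ∩ W = 𝒴 ∧ leftPerp 𝒴 ∩ W = 𝒳

end Ext

/-- `M` fits into a five-term exact sequence `0 → Y¹ → X₀ → M → Y⁰ → X₁ → 0` with
`X₀, X₁ ∈ 𝒳` and `Y⁰, Y¹ ∈ 𝒴`. -/
def FiveTerm (𝒳 𝒴 : Set C) (M : C) : Prop :=
  ∃ (Y1 X0 Y0 X1 : C) (a : Y1 ⟶ X0) (b : X0 ⟶ M) (c : M ⟶ Y0) (d : Y0 ⟶ X1)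
    (w₁ : a ≫ b = 0) (w₂ : b ≫ c = 0) (w₃ : c ≫ d = 0),
      Y1 ∈ 𝒴 ∧ X0 ∈ 𝒳 ∧ Y0 ∈ 𝒴 ∧ X1 ∈ 𝒳 ∧ Mono a ∧ Epi d ∧
      (ShortComplex.mk a b w₁).Exact ∧ (ShortComplex.mk b c w₂).Exact ∧
      (ShortComplex.mk c d w₃).Exact

section Ext

variable [HasExt.{w} C]

/-- A complete Ext-orthogonal pair. -/
def CompleteExtOrthPair (𝒳 𝒴 : Set C) : Prop :=
  ExtOrthPair 𝒳 𝒴 ∧ ∀ M : C, FiveTerm 𝒳 𝒴 M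

/-- A complete Ext-orthogonal pair relative to the wide subcategory `W`. -/
def CompleteExtOrthPairIn (W 𝒳 𝒴 : Set C) : Prop :=
  ExtOrthPairIn W 𝒳 𝒴 ∧ ∀ M ∈ W, FiveTerm 𝒳 𝒴 M

end Ext

/-- `P` belongs to `add A`: it is a direct summand of a finite direct sum of copies of `A`. -/
def memAdd (A P : C) : Prop :=
  ∃ (m : ℕ) (i : P ⟶ ⨁ (fun _ : Fin m => A)) (r : (⨁ (fun _ : Fin m => A)) ⟶ P),
    i ≫ r = 𝟙 P

/-- `P` belongs to the additive closure of a set `𝒮` of objects. -/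
def memAddSet (𝒮 : Set C) (P : C) : Prop :=
  ∃ (m : ℕ) (G : Fin m → C) (_ : ∀ i, G i ∈ 𝒮) (i : P ⟶ ⨁ G) (r : (⨁ G) ⟶ P),
    i ≫ r = 𝟙 P

section Linear

variable (k : Type u') [Field k] [Linear k C]

/-- Hom-finiteness over the field `k`. -/
def HomFinite : Prop := ∀ X Y : C, FiniteDimensional k (X ⟶ Y)

/-- Ext-finiteness over the field `k`: each Ext-group carries the structure of a
finite-dimensional `k`-vector space. -/
def ExtFinite [HasExt.{w} C] : Prop :=
  (∀ X Y : C, FiniteDimensional k (X ⟶ Y)) ∧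
  ∀ (X Y : C) (n : ℕ), ∃ _i : Module k (Abelian.Ext X Y n),
    @Module.Finite k (Abelian.Ext X Y n) _ _ _i

end Linear

/-- `X` has a composition series of length `n`. -/
def HasLength (X : C) (n : ℕ) : Prop :=
  ∃ s : Fin (n + 1) → Subobject X,
    s 0 = ⊥ ∧ s (Fin.last n) = ⊤ ∧ ∀ i : Fin n, s i.castSucc ⋖ s i.succ

/-- `X` is uniserial: its subobjects form a chain. -/
def UniserialObj (X : C) : Prop := ∀ A B : Subobject X, A ≤ B ∨ B ≤ A

/-- A length category: every object has finite length. -/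
def LengthCat (C : Type u) [Category.{v} C] [Abelian C] : Prop :=
  ∀ X : C, ∃ n, HasLength X n

/-- A uniserial category: a length category all of whose indecomposables are uniserial. -/
def UniserialCat (C : Type u) [Category.{v} C] [Abelian C] : Prop :=
  LengthCat C ∧ ∀ X : C, Indecomposable X → UniserialObj X

/-- `S` is (isomorphic to) a composition factor of `X`. -/
def IsCompFactor (X S : C) : Prop :=
  Simple S ∧ ∃ (A B : Subobject X) (h : A ≤ B),
    Nonempty (cokernel (Subobject.ofLE A B h) ≅ S)

/-- `T` is a simple quotient of `X` (for `X` uniserial indecomposable, this means `T ≅ top X`). -/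
def IsSimpleQuot (X T : C) : Prop := Simple T ∧ ∃ π : X ⟶ T, Epi π

/-- `T` is a simple subobject of `X` (for `X` uniserial, this means `T ≅ soc X`). -/
def IsSimpleSub (X T : C) : Prop := Simple T ∧ ∃ ι : T ⟶ X, Mono ι

/-- Connectedness of an additive category: there is no splitting of the indecomposable
objects into two nonzero Hom-orthogonal classes. -/
def ConnectedAdd (C : Type u) [Category.{v} C] [Abelian C] : Prop :=
  ¬ ∃ P Q : Set C,
    (∃ X ∈ P, ¬ IsZero X) ∧ (∃ Y ∈ Q, ¬ IsZero Y) ∧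
    (∀ X ∈ P, ∀ Y ∈ Q, (∀ f : X ⟶ Y, f = 0) ∧ (∀ g : Y ⟶ X, g = 0)) ∧
    (∀ Z : C, Indecomposable Z → Z ∈ P ∨ Z ∈ Q)

section Serre

variable (k : Type u') [Field k] [Linear k C] [HasExt.{w} C]

/-- Serre duality `Ext¹(X,Y) ≅ D Hom(Y, τX)` with respect to an endofunctor `τ`. -/
def SerreDuality (τ : C ⥤ C) : Prop :=
  ∀ X Y : C, Nonempty (Abelian.Ext X Y 1 ≃+ Module.Dual k (Y ⟶ τ.obj X))

/-- The data of a tube of rank `n`: a uniserial hereditary abelian category with Serre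
duality whose AR-translate `τ` permutes the `n` simple objects cyclically. -/
structure TubeData (n : ℕ) where
  npos : 0 < n
  τ : C ⥤ C
  isEquiv : τ.IsEquivalence
  serre : SerreDuality k τ
  S : Fin n → C
  simple : ∀ i, Simple (S i)
  all_simple : ∀ T : C, Simple T → ∃ i, Nonempty (T ≅ S i)
  distinct : ∀ i j, Nonempty (S i ≅ S j) → i = j
  tau_shift : ∀ i : Fin n, Nonempty (τ.obj (S i) ≅ S ⟨(i.val + (n - 1)) % n, Nat.mod_lt _ npos⟩)

end Serre



section Aux

variable {C : Type u} [Category.{v} C] [Abelian C] [HasExt.{w} C]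

private lemma aux_mk₀_add {X Y : C} (f g : X ⟶ Y) :
    Abelian.Ext.mk₀ (f + g) = (Abelian.Ext.mk₀ f + Abelian.Ext.mk₀ g : Abelian.Ext X Y 0) := by
  letI := HasDerivedCategory.standard C
  ext
  simp [Abelian.Ext.add_hom, ShiftedHom.mk₀, Preadditive.add_comp]

private lemma aux_mk₀_sum {X Y : C} {ι : Type*} (s : Finset ι) (f : ι → (X ⟶ Y)) :
    Abelian.Ext.mk₀ (∑ i ∈ s, f i) = ∑ i ∈ s, (Abelian.Ext.mk₀ (f i) : Abelian.Ext X Y 0) := by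
  classical
  induction s using Finset.induction with
  | empty => simp
  | insert _ _ h ih => rw [Finset.sum_insert h, Finset.sum_insert h, aux_mk₀_add, ih]

private lemma aux_biprod (A : C) (hA : Subsingleton (Abelian.Ext A A 1)) (m : ℕ) :
    ∀ z : Abelian.Ext A (⨁ fun _ : Fin m => A) 1, z = 0 := by
  intro z
  have htot : ∑ j : Fin m, biproduct.π (fun _ : Fin m => A) j ≫
      biproduct.ι (fun _ : Fin m => A) j = 𝟙 _ := biproduct.total
  have := Abelian.Ext.comp_mk₀_id z
  rw [← htot, aux_mk₀_sum] at this
  have h2 : (z.precomp (⨁ fun _ : Fin m => A) (add_zero 1))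
      (∑ i : Fin m, Abelian.Ext.mk₀ (biproduct.π (fun _ : Fin m => A) i ≫
        biproduct.ι (fun _ : Fin m => A) i)) = z := this
  rw [map_sum] at h2
  rw [← h2]
  apply Finset.sum_eq_zero
  intro j _
  show z.comp (Abelian.Ext.mk₀ _) (add_zero 1) = 0
  rw [← Abelian.Ext.mk₀_comp_mk₀,
    ← Abelian.Ext.comp_assoc _ _ _ (add_zero 1) (zero_add 0) (by omega)]
  have : z.comp (Abelian.Ext.mk₀ (biproduct.π (fun _ : Fin m => A) j)) (add_zero 1) = 0 :=
    Subsingleton.elim _ _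
  rw [this, Abelian.Ext.zero_comp]

end Aux

theorem stmt0 {C : Type u} [Category.{v} C] [Abelian C] [HasExt.{w} C]
    (k : Type u') [Field k] [Linear k C] (hfin : ExtFinite (C := C) k)
    (A : C) (hA : Rigid A)
    (S : ShortComplex C) (hS : S.ShortExact) (hadd : memAdd A S.X₃)
    (hsurj : Function.Surjective
      (fun f : A ⟶ S.X₃ => (Abelian.Ext.mk₀ f).comp hS.extClass (zero_add 1))) :
    Subsingleton (Abelian.Ext A S.X₂ 1) := by
  obtain ⟨m, i, r, hir⟩ := hadd
  have hX₃ : ∀ z : Abelian.Ext A S.X₃ 1, z = 0 := by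
    intro z
    have : (z.comp (Abelian.Ext.mk₀ i) (add_zero 1)).comp (Abelian.Ext.mk₀ r) (add_zero 1) = z := by
      rw [Abelian.Ext.comp_assoc_of_third_deg_zero, Abelian.Ext.mk₀_comp_mk₀, hir,
        Abelian.Ext.comp_mk₀_id]
    rw [← this, aux_biprod A hA m (z.comp (Abelian.Ext.mk₀ i) (add_zero 1)),
      Abelian.Ext.zero_comp]
  suffices h : ∀ x : Abelian.Ext A S.X₂ 1, x = 0 by
    exact ⟨fun a b => by rw [h a, h b]⟩
  intro x
  obtain ⟨x₁, hx₁⟩ := Abelian.Ext.covariant_sequence_exact₂ A hS x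
    (hX₃ (x.comp (Abelian.Ext.mk₀ S.g) (add_zero 1)))
  obtain ⟨f, hf⟩ := hsurj x₁
  rw [← hx₁, ← hf]
  dsimp only
  rw [Abelian.Ext.comp_assoc _ _ _ (zero_add 1) (add_zero 1) (by omega),
    hS.extClass_comp, Abelian.Ext.comp_zero]


end WideSub
end

section
/- Let H be a hereditary abelian category and W a wide subcategory such that every object M of H fits into an exact sequence 0 → Y¹ → X₀ → M → Y⁰ → X₁ → 0 with X₀, X₁ ∈ W and Y⁰, Y¹ ∈ W^⊥. Then (W, W^⊥) is a complete Ext-orthogonal pair; in particular W = ^⊥(W^⊥). -/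
open CategoryTheory CategoryTheory.Limits CategoryTheory.Abelian

attribute [local instance] CategoryTheory.Abelian.hasFiniteBiproducts

universe w v u u'

namespace WideSub

variable {C : Type u} [Category.{v} C] [Abelian C]

section Auxiliary

open DerivedCategory Pretriangulated

variable {C : Type u} [Category.{v} C] [Abelian C]

/-- The homology of a single complex computes the original object. -/
noncomputable def singleCompHomologyIso [HasDerivedCategory.{w} C] :
    DerivedCategory.singleFunctor C 0 ⋙ DerivedCategory.homologyFunctor C 0 ≅ 𝟭 C :=
  Functor.isoWhiskerRight ((SingleFunctors.evaluation _ _ 0).mapIso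
      (DerivedCategory.singleFunctorsPostcompQIso C))
      (DerivedCategory.homologyFunctor C 0) ≪≫
    Functor.associator _ _ _ ≪≫
    Functor.isoWhiskerLeft _ (DerivedCategory.homologyFunctorFactors C 0) ≪≫
    HomologicalComplex.homologyFunctorSingleIso C (ComplexShape.up ℤ) 0

/-- A short exact sequence with vanishing `Ext¹` splits. -/
lemma exists_retraction [HasExt.{w} C] {S : ShortComplex C} (hS : S.ShortExact)
    (hsub : Subsingleton (Abelian.Ext S.X₃ S.X₁ 1)) :
    ∃ r : S.X₂ ⟶ S.X₁, S.f ≫ r = 𝟙 S.X₁ := by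
  letI := HasDerivedCategory.standard C
  have hδ : hS.singleδ = 0 := by
    rw [← hS.extClass_hom, Subsingleton.elim hS.extClass 0]
    exact Abelian.Ext.zero_hom S.X₃ S.X₁ 1
  obtain ⟨g, hg⟩ := Triangle.yoneda_exact₂ _
    (inv_rot_of_distTriang _ hS.singleTriangle_distinguished)
    (𝟙 ((DerivedCategory.singleFunctor C 0).obj S.X₁)) (by simp [hδ]; erw [Functor.map_zero, zero_comp, neg_zero, zero_comp])
  simp only [Triangle.invRotate_mor₂, ShortComplex.ShortExact.singleTriangle_mor₁] at hg
  set H := DerivedCategory.homologyFunctor C 0 with hH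
  set e : DerivedCategory.singleFunctor C 0 ⋙ H ≅ 𝟭 C := singleCompHomologyIso with he
  refine ⟨e.inv.app S.X₂ ≫ H.map g ≫ e.hom.app S.X₁, ?_⟩
  have hnat : S.f ≫ e.inv.app S.X₂ =
      e.inv.app S.X₁ ≫ H.map ((DerivedCategory.singleFunctor C 0).map S.f) := by
    simpa using e.inv.naturality S.f
  calc S.f ≫ e.inv.app S.X₂ ≫ H.map g ≫ e.hom.app S.X₁
      = (S.f ≫ e.inv.app S.X₂) ≫ H.map g ≫ e.hom.app S.X₁ := by
        rw [Category.assoc]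
    _ = e.inv.app S.X₁ ≫ (H.map ((DerivedCategory.singleFunctor C 0).map S.f) ≫
          H.map g) ≫ e.hom.app S.X₁ := by
        rw [hnat]; simp [Category.assoc]
    _ = e.inv.app S.X₁ ≫ H.map ((DerivedCategory.singleFunctor C 0).map S.f ≫ g) ≫
          e.hom.app S.X₁ := by erw [H.map_comp]
    _ = e.inv.app S.X₁ ≫ H.map (𝟙 _) ≫ e.hom.app S.X₁ := by erw [← hg]
    _ = 𝟙 S.X₁ := by simp

end Auxiliary


theorem stmt6 {C : Type u} [Category.{v} C] [Abelian C] [HasExt.{w} C]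
    (hher : Hereditary C) (W : Set C) (hW : IsWide W)
    (h5 : ∀ M : C, FiveTerm W (rightPerp W) M) :
    CompleteExtOrthPair W (rightPerp W) := by
  refine ⟨⟨rfl, ?_⟩, h5⟩
  apply Set.eq_of_subset_of_subset
  · intro M hM
    obtain ⟨Y1, X0, Y0, X1, a, b, c, d, w₁, w₂, w₃, hY1, hX0, hY0, hX1,
      hmono_a, hepi_d, ex₁, ex₂, ex₃⟩ := h5 M
    have hc : c = 0 := (hM Y0 hY0).1 c
    have hepi_b : Epi b := ((ShortComplex.mk b c w₂).exact_iff_epi hc).1 ex₂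
    have hS : (ShortComplex.mk a b w₁).ShortExact :=
      { exact := ex₁, mono_f := hmono_a, epi_g := hepi_b }
    obtain ⟨r, hr⟩ := exists_retraction hS ((hM Y1 hY1).2)
    have hr0 : r = 0 := (hY1 X0 hX0).1 r
    have hzero : IsZero Y1 := by
      rw [IsZero.iff_id_eq_zero, ← hr, hr0, comp_zero]
    have ha0 : a = 0 := hzero.eq_of_src a 0
    have hmono_b : Mono b := ((ShortComplex.mk a b w₁).exact_iff_mono ha0).1 ex₁
    have : IsIso b := isIso_of_mono_of_epi b
    exact hW.1 X0 M ⟨asIso b⟩ hX0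
  · intro M hM Y hY
    exact hY M hM


end WideSub
end

section
/- Let (X,Y) be a complete Ext-orthogonal pair in a hereditary abelian category H, and let W be a wide subcategory of H containing X. Then (X, W ∩ Y) is a complete Ext-orthogonal pair in W. -/
open CategoryTheory CategoryTheory.Limits CategoryTheory.Abelian

attribute [local instance] CategoryTheory.Abelian.hasFiniteBiproducts

universe w v u u'

namespace WideSub

variable {C : Type u} [Category.{v} C] [Abelian C]

lemma fiveTerm_mem {C : Type u} [Category.{v} C] [Abelian C] [HasExt.{w} C]
    (𝒳 𝒴 W : Set C) (hW : IsWide W) (hXW : 𝒳 ⊆ W) (M : C) (hMW : M ∈ W)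
    (ft : FiveTerm 𝒳 𝒴 M) : FiveTerm 𝒳 (W ∩ 𝒴) M := by
  obtain ⟨Y1, X0, Y0, X1, a, b, c, d, w₁, w₂, w₃, hY1, hX0, hY0, hX1, ha, hd, hex₁, hex₂, hex₃⟩ := ft
  haveI := ha; haveI := hd
  -- Y1 ∈ W
  have hkb : kernel b ∈ W := hW.2.1 X0 M b (hXW hX0) hMW
  have hY1W : Y1 ∈ W := by
    have e : Y1 ≅ kernel b :=
      IsLimit.conePointUniqueUpToIso hex₁.fIsKernel (limit.isLimit _)
    exact hW.1 (kernel b) Y1 ⟨e.symm⟩ hkb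
  -- cokernel b ∈ W
  have hcb : cokernel b ∈ W := hW.2.2.1 X0 M b (hXW hX0) hMW
  -- kernel d ≅ cokernel b
  have hc' : Epi (kernel.lift d c w₃) :=
    (ShortComplex.exact_iff_epi_kernel_lift _).mp hex₃
  have w₂' : b ≫ kernel.lift d c w₃ = 0 := by
    rw [← cancel_mono (kernel.ι d)]
    simp [w₂]
  have hex' : (ShortComplex.mk b (kernel.lift d c w₃) w₂').Exact := by
    rw [ShortComplex.exact_iff_of_epi_of_isIso_of_mono
      (S₂ := ShortComplex.mk b c w₂)
      (ShortComplex.Hom.mk (τ₁ := 𝟙 X0) (τ₂ := 𝟙 M) (τ₃ := kernel.ι d)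
        (by simp) (by simp))]
    exact hex₂
  haveI : Epi (ShortComplex.mk b (kernel.lift d c w₃) w₂').g := hc'
  have e2 : kernel d ≅ cokernel b :=
    IsColimit.coconePointUniqueUpToIso hex'.gIsCokernel (colimit.isColimit _)
  have hkd : kernel d ∈ W := hW.1 (cokernel b) (kernel d) ⟨e2.symm⟩ hcb
  -- Y0 ∈ W via extension 0 → kernel d → Y0 → X1 → 0
  have hse4 : (ShortComplex.mk (kernel.ι d) d (kernel.condition d)).ShortExact := by
    have hexact : (ShortComplex.mk (kernel.ι d) d (kernel.condition d)).Exact :=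
      ShortComplex.exact_of_f_is_kernel _ (kernelIsKernel d)
    exact ⟨hexact⟩
  have hY0W : Y0 ∈ W := hW.2.2.2 _ hse4 hkd (hXW hX1)
  exact ⟨Y1, X0, Y0, X1, a, b, c, d, w₁, w₂, w₃, ⟨hY1W, hY1⟩, hX0, ⟨hY0W, hY0⟩, hX1,
    ha, hd, hex₁, hex₂, hex₃⟩

theorem stmt7 {C : Type u} [Category.{v} C] [Abelian C] [HasExt.{w} C]
    (hher : Hereditary C) (𝒳 𝒴 W : Set C)
    (hpair : CompleteExtOrthPair 𝒳 𝒴) (hW : IsWide W) (hXW : 𝒳 ⊆ W) :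
    CompleteExtOrthPairIn W 𝒳 (W ∩ 𝒴) := by
  obtain ⟨⟨hr, hl⟩, hcomp⟩ := hpair
  constructor
  · constructor
    · rw [hr]; exact Set.inter_comm _ _
    · ext M
      constructor
      · rintro ⟨hMperp, hMW⟩
        obtain ⟨Y1, X0, Y0, X1, a, b, c, d, w₁, w₂, w₃, hY1, hX0, hY0, hX1, ha, hd,
            hex₁, hex₂, hex₃⟩ := fiveTerm_mem 𝒳 𝒴 W hW hXW M hMW (hcomp M)
        have hc : c = 0 := (hMperp Y0 hY0).1 c
        haveI hb : Epi b := (ShortComplex.exact_iff_epi _ hc).mp hex₂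
        haveI := ha
        have hse : (ShortComplex.mk a b w₁).ShortExact := ⟨hex₁⟩
        have hext0 : hse.extClass = 0 := by
          have : Subsingleton (Abelian.Ext M Y1 1) := (hMperp Y1 hY1).2
          exact Subsingleton.elim _ _
        have hX0p : X0 ∈ leftPerp 𝒴 := by rw [hl]; exact hX0
        rw [← hl]
        simp only [leftPerp, Set.mem_setOf_eq]
        intro Y hY
        constructor
        · intro f
          have h0 : b ≫ f = 0 := (hX0p Y hY).1 (b ≫ f)
          rwa [← cancel_epi b, comp_zero]
        · have key : ∀ e : Abelian.Ext M Y 1, e = 0 := by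
            intro e
            have h1 : (Abelian.Ext.mk₀ b).comp e (zero_add 1) = 0 := by
              have : Subsingleton (Abelian.Ext X0 Y 1) := (hX0p Y hY).2
              exact Subsingleton.elim _ _
            obtain ⟨x₁, hx₁⟩ := Ext.contravariant_sequence_exact₃ hse Y e h1 (add_zero 1)
            rw [← hx₁, hext0]
            simp
          exact ⟨fun e₁ e₂ => by rw [key e₁, key e₂]⟩
      · intro hM
        refine ⟨?_, hXW hM⟩
        have hM' : M ∈ leftPerp 𝒴 := by rw [hl]; exact hM
        intro Y hY
        exact hM' Y hY.2
  · intro M hM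
    exact fiveTerm_mem 𝒳 𝒴 W hW hXW M hM (hcomp M)

end WideSub
end

section
/- Let A be a poset and A₁, A₂ full subposets such that A = A₁ ∪ A₂ and every comparable pair (x ≤ y) in A lies entirely in A₁ or entirely in A₂. Then the commutative square of inclusions with corners A₁ ∩ A₂, A₁, A₂, A is a pushout in the category of posets. -/
universe u u'

namespace WideSub

theorem stmt19 {A : Type u} [PartialOrder A] (A₁ A₂ : Set A)
    (hcover : A₁ ∪ A₂ = Set.univ)
    (hord : ∀ x y : A, x ≤ y → (x ∈ A₁ ∧ y ∈ A₁) ∨ (x ∈ A₂ ∧ y ∈ A₂))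
    (B : Type u') [PartialOrder B]
    (f₁ : A₁ → B) (f₂ : A₂ → B) (hf₁ : Monotone f₁) (hf₂ : Monotone f₂)
    (hagree : ∀ (x : A) (h₁ : x ∈ A₁) (h₂ : x ∈ A₂), f₁ ⟨x, h₁⟩ = f₂ ⟨x, h₂⟩) :
    ∃! g : A → B, Monotone g ∧ (∀ (x : A) (h : x ∈ A₁), g x = f₁ ⟨x, h⟩) ∧
      (∀ (x : A) (h : x ∈ A₂), g x = f₂ ⟨x, h⟩) := by
  classical
  have hmem : ∀ x : A, x ∈ A₁ ∪ A₂ := by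
    intro x; rw [hcover]; trivial
  set g : A → B := fun x =>
    if h : x ∈ A₁ then f₁ ⟨x, h⟩ else f₂ ⟨x, (hmem x).resolve_left h⟩ with hg
  have hg1 : ∀ (x : A) (h : x ∈ A₁), g x = f₁ ⟨x, h⟩ := by
    intro x h; simp [hg, h]
  have hg2 : ∀ (x : A) (h : x ∈ A₂), g x = f₂ ⟨x, h⟩ := by
    intro x h
    by_cases h1 : x ∈ A₁
    · rw [hg1 x h1]; exact hagree x h1 h
    · simp [hg, h1]
  refine ⟨g, ⟨?_, hg1, hg2⟩, ?_⟩
  · intro x y hxy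
    rcases hord x y hxy with ⟨hx, hy⟩ | ⟨hx, hy⟩
    · rw [hg1 x hx, hg1 y hy]; exact hf₁ hxy
    · rw [hg2 x hx, hg2 y hy]; exact hf₂ hxy
  · rintro g' ⟨-, h1, h2⟩
    funext x
    rcases hmem x with h | h
    · rw [h1 x h, hg1 x h]
    · rw [h2 x h, hg2 x h]

end WideSub
end
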